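/- For every natural number n ≥ 1 and every real λ, the determinants B_n(λ) = det(A_n − λI) satisfy the three-term recurrence B_{n+1}(λ) = −λ·B_n(λ) − n·B_{n−1}(λ), with base cases B_1(λ) = −λ and B_2(λ) = λ² − 1 (where B_0(λ) = 1). -/
import Mathlib


open Polynomial Matrix

/-- The `n × n` tridiagonal matrix `A_n` with zero diagonal, subdiagonal entries `1`,
and superdiagonal entries `(A_n)_{i,i+1} = i + 1`. -/
noncomputable def hermMatrix (n : ℕ) : Matrix (Fin n) (Fin n) ℝ :=
  Matrix.of fun i j =>
    if (j : ℕ) = (i : ℕ) + 1 then ((i : ℕ) + 1 : ℝ)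
    else if (i : ℕ) = (j : ℕ) + 1 then 1
    else 0

/-- `B_n(λ) = det (A_n - λ I)`.  (For `n = 0` this is the determinant of the empty
matrix, namely `1`.) -/
noncomputable def Bdet (n : ℕ) (l : ℝ) : ℝ :=
  (hermMatrix n - l • (1 : Matrix (Fin n) (Fin n) ℝ)).det

/-- Entry function of `A_n - l•1`, depending only on natural indices. -/
noncomputable def entryFn (l : ℝ) (i j : ℕ) : ℝ :=
  if j = i + 1 then (i + 1 : ℝ) else if i = j + 1 then 1 else if i = j then -l else 0

noncomputable def Mmat (l : ℝ) (n : ℕ) : Matrix (Fin n) (Fin n) ℝ :=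
  Matrix.of fun i j => entryFn l (i : ℕ) (j : ℕ)

lemma Bdet_eq (n : ℕ) (l : ℝ) : Bdet n l = (Mmat l n).det := by
  unfold Bdet Mmat
  congr 1
  ext i j
  by_cases hij : i = j
  · subst hij
    simp [hermMatrix, entryFn, Matrix.one_apply, Matrix.sub_apply]
  · have hij' : (i : ℕ) ≠ (j : ℕ) := fun h => hij (Fin.ext h)
    simp [hermMatrix, entryFn, Matrix.one_apply, Matrix.sub_apply, hij, hij']

lemma succAbove_val {m : ℕ} (p : Fin (m + 1)) (k : Fin m) :
    ((p.succAbove k : Fin (m + 1)) : ℕ) = if (k : ℕ) < (p : ℕ) then (k : ℕ) else (k : ℕ) + 1 := by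
  rw [Fin.succAbove]
  split_ifs with h1 h2 h2
  · rfl
  · exact absurd (by simpa [Fin.lt_def] using h1) h2
  · exact absurd (by simpa [Fin.lt_def] using h2) h1
  · rfl

lemma Mmat_rec (l : ℝ) (n : ℕ) :
    (Mmat l (n + 2)).det = -l * (Mmat l (n + 1)).det - ((n : ℝ) + 1) * (Mmat l n).det := by
  set j1 : Fin (n + 2) := ⟨n, by omega⟩ with hj1
  set j2 : Fin (n + 2) := Fin.last (n + 1) with hj2
  have hj12 : j1 ≠ j2 := by
    intro h
    have := congrArg Fin.val h
    simp [hj1, hj2, Fin.last] at this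
  rw [Matrix.det_succ_row (Mmat l (n + 2)) (Fin.last (n + 1))]
  have hz : ∀ j ∈ (Finset.univ : Finset (Fin (n+2))), j ∉ ({j1, j2} : Finset (Fin (n+2))) →
      (-1 : ℝ) ^ ((Fin.last (n+1) : ℕ) + (j : ℕ)) * Mmat l (n+2) (Fin.last (n+1)) j *
        ((Mmat l (n+2)).submatrix (Fin.last (n+1)).succAbove j.succAbove).det = 0 := by
    intro j _ hj
    have h1 : (j : ℕ) ≠ n := by
      intro h; exact hj (by simp [hj1, Finset.mem_insert]; left; exact Fin.ext h)
    have h2 : (j : ℕ) ≠ n + 1 := by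
      intro h; exact hj (by simp [hj2, Finset.mem_insert]; right; exact Fin.ext h)
    have : Mmat l (n+2) (Fin.last (n+1)) j = 0 := by
      simp only [Mmat, Matrix.of_apply, entryFn, Fin.val_last]
      rw [if_neg (by omega), if_neg (by omega), if_neg (by omega)]
    rw [this]; ring
  rw [← Finset.sum_subset (Finset.subset_univ {j1, j2}) hz, Finset.sum_pair hj12]
  -- the j2 (last column) term
  have hsub2 : (Mmat l (n+2)).submatrix (Fin.last (n+1)).succAbove j2.succAbove
      = Mmat l (n+1) := by
    ext a b
    simp only [Matrix.submatrix_apply, hj2, Fin.succAbove_last, Mmat, Matrix.of_apply,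
      Fin.coe_castSucc]
  have hterm2 : (-1 : ℝ) ^ ((Fin.last (n+1) : ℕ) + (j2 : ℕ)) * Mmat l (n+2) (Fin.last (n+1)) j2 *
      ((Mmat l (n+2)).submatrix (Fin.last (n+1)).succAbove j2.succAbove).det
      = -l * (Mmat l (n+1)).det := by
    rw [hsub2]
    have hent : Mmat l (n+2) (Fin.last (n+1)) j2 = -l := by
      simp only [Mmat, Matrix.of_apply, entryFn, hj2, Fin.val_last]
      norm_num
    rw [hent]
    have hsign : ((-1 : ℝ)) ^ ((Fin.last (n+1) : ℕ) + (j2 : ℕ)) = 1 := by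
      have : ((Fin.last (n+1) : ℕ) + (j2 : ℕ)) = 2 * (n + 1) := by
        simp [hj2, Fin.val_last]; ring
      rw [this, pow_mul]; norm_num
    rw [hsign]; ring
  -- the j1 term
  have hcol : ((j1.succAbove (Fin.last n) : Fin (n+2)) : ℕ) = n + 1 := by
    rw [succAbove_val]
    simp [hj1]
  have hminor : ((Mmat l (n+2)).submatrix (Fin.last (n+1)).succAbove j1.succAbove).det
      = ((n : ℝ) + 1) * (Mmat l n).det := by
    set N := (Mmat l (n+2)).submatrix (Fin.last (n+1)).succAbove j1.succAbove with hN
    rw [Matrix.det_succ_column N (Fin.last n)]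
    have hNz : ∀ i ∈ (Finset.univ : Finset (Fin (n+1))),
        i ∉ ({Fin.last n} : Finset (Fin (n+1))) →
        (-1 : ℝ) ^ ((i : ℕ) + (Fin.last n : ℕ)) * N i (Fin.last n) *
          (N.submatrix i.succAbove (Fin.last n).succAbove).det = 0 := by
      intro i _ hi
      have h1 : (i : ℕ) ≠ n := by
        intro h; exact hi (by simp; exact Fin.ext h)
      have : N i (Fin.last n) = 0 := by
        simp only [hN, Matrix.submatrix_apply, Fin.succAbove_last, Mmat, Matrix.of_apply,
          Fin.coe_castSucc, entryFn, hcol]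
        have hi2 : (i : ℕ) < n + 1 := i.isLt
        rw [if_neg (by omega), if_neg (by omega), if_neg (by omega)]
      rw [this]; ring
    rw [← Finset.sum_subset (Finset.subset_univ {Fin.last n}) hNz, Finset.sum_singleton]
    have hent : N (Fin.last n) (Fin.last n) = (n : ℝ) + 1 := by
      simp only [hN, Matrix.submatrix_apply, Fin.succAbove_last, Mmat, Matrix.of_apply,
        Fin.coe_castSucc, entryFn, hcol, Fin.val_last]
      norm_num
    have hsub : N.submatrix (Fin.last n).succAbove (Fin.last n).succAbove = Mmat l n := by
      ext a b
      have hb : ((j1.succAbove (Fin.castSucc b) : Fin (n+2)) : ℕ) = (b : ℕ) := by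
        rw [succAbove_val]
        simp [hj1, b.isLt]
      simp only [hN, Matrix.submatrix_apply, Fin.succAbove_last, Mmat, Matrix.of_apply,
        Fin.coe_castSucc, hb]
    rw [hent, hsub]
    have hsign : ((-1 : ℝ)) ^ ((Fin.last n : ℕ) + (Fin.last n : ℕ)) = 1 := by
      have : ((Fin.last n : ℕ) + (Fin.last n : ℕ)) = 2 * n := by simp [Fin.val_last]; ring
      rw [this, pow_mul]; norm_num
    rw [hsign]; ring
  have hent1 : Mmat l (n+2) (Fin.last (n+1)) j1 = 1 := by
    simp only [Mmat, Matrix.of_apply, entryFn, hj1, Fin.val_last]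
    rw [if_neg (by omega)]
    norm_num
  have hsign1 : ((-1 : ℝ)) ^ ((Fin.last (n+1) : ℕ) + (j1 : ℕ)) = -1 := by
    have : ((Fin.last (n+1) : ℕ) + (j1 : ℕ)) = 2 * n + 1 := by
      simp [hj1, Fin.val_last]; ring
    rw [this, pow_succ, pow_mul]; norm_num
  rw [hterm2, hminor, hent1, hsign1]
  ring

lemma Bdet_rec (l : ℝ) (n : ℕ) :
    Bdet (n + 2) l = -l * Bdet (n + 1) l - ((n : ℝ) + 1) * Bdet n l := by
  rw [Bdet_eq, Bdet_eq, Bdet_eq, Mmat_rec]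

/-- The determinants `B_n(λ) = det (A_n - λ I)` satisfy the three-term recurrence
`B_{n+1} = -λ B_n - n B_{n-1}` for `n ≥ 1`, with `B_0 = 1`, `B_1 = -λ`, `B_2 = λ² - 1`. -/
theorem stmt_1 (n : ℕ) (hn : 1 ≤ n) (l : ℝ) :
    Bdet (n + 1) l = -l * Bdet n l - (n : ℝ) * Bdet (n - 1) l ∧
    Bdet 0 l = 1 ∧ Bdet 1 l = -l ∧ Bdet 2 l = l ^ 2 - 1 := by
  have h0 : Bdet 0 l = 1 := by simp [Bdet]
  have h1 : Bdet 1 l = -l := by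
    simp [Bdet_eq, Matrix.det_fin_one, Mmat, entryFn]
  have h2 : Bdet 2 l = l ^ 2 - 1 := by
    rw [Bdet_rec l 0, h0, h1]
    push_cast; ring
  refine ⟨?_, h0, h1, h2⟩
  obtain ⟨m, rfl⟩ : ∃ m, n = m + 1 := ⟨n - 1, by omega⟩
  simp only [Nat.add_sub_cancel]
  rw [Bdet_rec l m]
  push_cast; ring
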